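/- Let f : (0,∞) → ℂ be measurable and integrable on (0,M) for every M > 0, and suppose there exist B ∈ ℂ and σ > −1 such that f(t)/t^σ → B as t → +∞. Then for every s ∈ ℂ with Re s > 0 the function t ↦ e^{−st} f(t) is absolutely integrable on (0,∞), and for every θ ∈ (0, π/2): for each ε > 0 there is δ > 0 such that every s ∈ ℂ with 0 < |s| ≤ δ and |arg(s)| ≤ θ satisfies |s^{σ+1} ∫₀^∞ e^{−st} f(t) dt − B·Γ(σ+1)| ≤ ε. In other words, ∫₀^∞ e^{−st} f(t) dt is asymptotically B·Γ(σ+1)/s^{σ+1} as s → 0 within the angular region |arg(s)| ≤ θ < π/2. -/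

import Mathlib

open MeasureTheory Set Filter

private lemma abs_cexp_neg_mul (s : ℂ) (t : ℝ) :
    ‖Complex.exp (-s * t)‖ = Real.exp (-(s.re * t)) := by
  rw [Complex.norm_exp]
  congr 1
  simp [Complex.mul_re]

private lemma meas_cexp_mul (s : ℂ) {g : ℝ → ℂ} (hg : Measurable g) :
    Measurable fun t : ℝ => Complex.exp (-s * t) * g t :=
  ((measurable_const.mul Complex.measurable_ofReal).cexp).mul hg

private lemma integrableOn_rpow_exp {σ a : ℝ} (hσ : -1 < σ) (ha : 0 < a) :
    IntegrableOn (fun t : ℝ => t ^ σ * Real.exp (-(a * t))) (Set.Ioi 0) := by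
  have h := integrableOn_rpow_mul_exp_neg_mul_rpow hσ one_pos ha
  simpa [Real.rpow_one, neg_mul] using h

private lemma integral_rpow_exp {σ a : ℝ} (hσ : -1 < σ) (ha : 0 < a) :
    ∫ t in Set.Ioi (0:ℝ), t ^ σ * Real.exp (-(a * t))
      = (1/a) ^ (σ+1) * Real.Gamma (σ+1) := by
  have h := Real.integral_rpow_mul_exp_neg_mul_Ioi (by linarith : (0:ℝ) < σ+1) ha
  simpa using h

private lemma integrable_exp_mul {g : ℝ → ℂ} (hg : Measurable g)
    (hloc : ∀ M > (0:ℝ), IntegrableOn g (Set.Ioo 0 M))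
    {σ : ℝ} (hσ : -1 < σ) {C M : ℝ} (hM : 0 < M)
    (hbound : ∀ t ≥ M, ‖g t‖ ≤ C * t ^ σ)
    {s : ℂ} (hs : 0 < s.re) :
    IntegrableOn (fun t : ℝ => Complex.exp (-s * t) * g t) (Set.Ioi 0) := by
  have hmeas : Measurable fun t : ℝ => Complex.exp (-s * t) * g t := meas_cexp_mul s hg
  rw [← Set.Ioo_union_Ici_eq_Ioi hM]
  refine IntegrableOn.union ?_ ?_
  · refine Integrable.mono (hloc M hM) hmeas.aestronglyMeasurable.restrict ?_
    filter_upwards [self_mem_ae_restrict measurableSet_Ioo] with t ht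
    have h1 : ‖Complex.exp (-s * t)‖ ≤ 1 := by
      rw [abs_cexp_neg_mul, Real.exp_le_one_iff]
      have := ht.1
      nlinarith [hs]
    calc ‖Complex.exp (-s * t) * g t‖
        = ‖Complex.exp (-s * t)‖ * ‖g t‖ := by
          rw [norm_mul]
      _ ≤ 1 * ‖g t‖ := by
          exact mul_le_mul_of_nonneg_right h1 (norm_nonneg _)
      _ = ‖g t‖ := by simp
  · set C' := max C 0 with hC'
    have hC0 : 0 ≤ C' := le_max_right _ _
    have hint : IntegrableOn (fun t : ℝ => C' * (t ^ σ * Real.exp (-(s.re * t))))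
        (Set.Ici M) := by
      have h0 : IntegrableOn (fun t : ℝ => C' * (t ^ σ * Real.exp (-(s.re * t))))
          (Set.Ioi 0) := (integrableOn_rpow_exp hσ hs).const_mul C'
      exact h0.mono_set (fun x hx => lt_of_lt_of_le hM hx)
    refine Integrable.mono hint hmeas.aestronglyMeasurable.restrict ?_
    filter_upwards [self_mem_ae_restrict measurableSet_Ici] with t ht
    have ht0 : 0 < t := lt_of_lt_of_le hM ht
    have h2 : ‖g t‖ ≤ C' * t ^ σ := by
      refine (hbound t ht).trans ?_
      exact mul_le_mul_of_nonneg_right (le_max_left _ _) (Real.rpow_nonneg ht0.le _)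
    have hnn : 0 ≤ C' * (t ^ σ * Real.exp (-(s.re * t))) := by positivity
    calc ‖Complex.exp (-s * t) * g t‖
        = Real.exp (-(s.re * t)) * ‖g t‖ := by
          rw [norm_mul, abs_cexp_neg_mul]
      _ ≤ Real.exp (-(s.re * t)) * (C' * t ^ σ) :=
          mul_le_mul_of_nonneg_left h2 (Real.exp_nonneg _)
      _ = C' * (t ^ σ * Real.exp (-(s.re * t))) := by ring
      _ = ‖C' * (t ^ σ * Real.exp (-(s.re * t)))‖ := (Real.norm_of_nonneg hnn).symm

private lemma meas_rpow (σ : ℝ) : Measurable fun t : ℝ => t ^ σ := by measurability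

private lemma integrable_power_exp {σ : ℝ} (hσ : -1 < σ) {s : ℂ} (hs : 0 < s.re) :
    IntegrableOn (fun t : ℝ => ((t ^ σ : ℝ) : ℂ) * Complex.exp (-s * t)) (Set.Ioi 0) := by
  have hmeas : Measurable fun t : ℝ => ((t ^ σ : ℝ) : ℂ) * Complex.exp (-s * t) :=
    (Complex.measurable_ofReal.comp (meas_rpow σ)).mul
      ((measurable_const.mul Complex.measurable_ofReal).cexp)
  refine Integrable.mono ((integrableOn_rpow_exp hσ hs) : Integrable _ _)
    hmeas.aestronglyMeasurable.restrict ?_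
  filter_upwards [self_mem_ae_restrict measurableSet_Ioi] with t ht
  have ht0 : (0:ℝ) < t := ht
  have hnn : 0 ≤ t ^ σ * Real.exp (-(s.re * t)) := by positivity
  rw [norm_mul, abs_cexp_neg_mul,
    Complex.norm_real, Real.norm_eq_abs, abs_of_nonneg (Real.rpow_nonneg ht0.le σ), Real.norm_of_nonneg hnn]

private lemma gamma_integral_complex {σ : ℝ} (hσ : -1 < σ) {s : ℂ} (hs : 0 < s.re) :
    ∫ t in Set.Ioi (0:ℝ), ((t ^ σ : ℝ) : ℂ) * Complex.exp (-s * t)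
      = (Real.Gamma (σ+1) : ℂ) / s ^ ((σ:ℂ)+1) := by
  set U : Set ℂ := {z | 0 < z.re} with hU
  have hUo : IsOpen U := isOpen_lt continuous_const Complex.continuous_re
  set Fi : ℂ → ℂ := fun z => ∫ t in Set.Ioi (0:ℝ), ((t ^ σ : ℝ) : ℂ) * Complex.exp (-z * t)
    with hFi
  set G : ℂ → ℂ := fun z => (Real.Gamma (σ+1) : ℂ) / z ^ ((σ:ℂ)+1) with hG
  -- analyticity of Fi
  have hFdiff : DifferentiableOn ℂ Fi U := by
    intro z₀ hz₀
    have hz₀re : 0 < z₀.re := hz₀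
    set ε : ℝ := z₀.re / 2 with hε
    have hεpos : 0 < ε := by positivity
    have key := hasDerivAt_integral_of_dominated_loc_of_deriv_le (μ := volume.restrict (Set.Ioi 0))
      (F := fun z t => ((t ^ σ : ℝ) : ℂ) * Complex.exp (-z * t))
      (F' := fun z t => ((t ^ σ : ℝ) : ℂ) * (Complex.exp (-z * t) * (-1 * (t:ℂ))))
      (x₀ := z₀) (s := Metric.ball z₀ ε) (bound := fun t => t ^ (σ+1) * Real.exp (-(ε * t))) (Metric.ball_mem_nhds z₀ hεpos)
      ?_ ?_ ?_ ?_ ?_ ?_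
    · exact (key.2.differentiableAt).differentiableWithinAt
    · filter_upwards with z
      exact ((Complex.measurable_ofReal.comp (meas_rpow σ)).mul
        ((measurable_const.mul Complex.measurable_ofReal).cexp)).aestronglyMeasurable.restrict
    · exact integrable_power_exp hσ hz₀re
    · exact ((Complex.measurable_ofReal.comp (meas_rpow σ)).mul
        (((measurable_const.mul Complex.measurable_ofReal).cexp).mul
          (measurable_const.mul Complex.measurable_ofReal))).aestronglyMeasurable.restrict
    · filter_upwards [self_mem_ae_restrict measurableSet_Ioi] with t ht z hz
      have ht0 : (0:ℝ) < t := ht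
      have hzre : ε ≤ z.re := by
        have h1 : |(z - z₀).re| ≤ ‖z - z₀‖ := Complex.abs_re_le_norm _
        have h2 : ‖z - z₀‖ < ε := by
          simpa [Complex.dist_eq] using (Metric.mem_ball.mp hz)
        have h3 : |z.re - z₀.re| < ε := by
          simpa [Complex.sub_re] using lt_of_le_of_lt h1 h2
        have := abs_lt.mp h3
        simp only [hε] at *
        linarith [this.1]
      have hexp : Real.exp (-(z.re * t)) ≤ Real.exp (-(ε * t)) := by
        apply Real.exp_le_exp.mpr
        nlinarith
      calc ‖((t ^ σ : ℝ) : ℂ) * (Complex.exp (-z * t) * (-1 * (t:ℂ)))‖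
          = t ^ σ * (Real.exp (-(z.re * t)) * t) := by
            rw [norm_mul, norm_mul,
              abs_cexp_neg_mul, Complex.norm_real, Real.norm_eq_abs,
              abs_of_nonneg (Real.rpow_nonneg ht0.le σ)]
            simp [abs_of_nonneg ht0.le, Complex.norm_real, Real.norm_eq_abs]
        _ ≤ t ^ σ * (Real.exp (-(ε * t)) * t) := by
            have h0 : 0 ≤ t ^ σ := Real.rpow_nonneg ht0.le σ
            exact mul_le_mul_of_nonneg_left
              (mul_le_mul_of_nonneg_right hexp ht0.le) h0
        _ = t ^ (σ+1) * Real.exp (-(ε * t)) := by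
            rw [Real.rpow_add_one ht0.ne']
            ring
    · exact integrableOn_rpow_exp (by linarith) hεpos
    · filter_upwards [self_mem_ae_restrict measurableSet_Ioi] with t _ z _
      have h1 : HasDerivAt (fun z : ℂ => -z * (t:ℂ)) (-1 * (t:ℂ)) z :=
        (hasDerivAt_neg z).mul_const _
      exact (h1.cexp).const_mul _
  have hFa : AnalyticOnNhd ℂ Fi U := hFdiff.analyticOnNhd hUo
  have hGa : AnalyticOnNhd ℂ G U := by
    refine DifferentiableOn.analyticOnNhd (fun z hz => ?_) hUo
    have hzre : 0 < z.re := hz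
    have hz0 : z ≠ 0 := by
      intro h; rw [h] at hzre; simp at hzre
    have hslit : z ∈ Complex.slitPlane := Or.inl hzre
    have hd : DifferentiableAt ℂ (fun z : ℂ => z ^ ((σ:ℂ)+1)) z :=
      ((hasDerivAt_id z).cpow_const hslit).differentiableAt
    have hne : z ^ ((σ:ℂ)+1) ≠ 0 := by
      rw [Ne, Complex.cpow_eq_zero_iff]
      tauto
    exact ((differentiableAt_const _).div hd hne).differentiableWithinAt
  have hpre : IsPreconnected U := (convex_halfSpace_re_gt 0).isPreconnected
  have h1U : (1:ℂ) ∈ U := by simp [hU]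
  have hreal : ∀ r : ℝ, 0 < r → Fi r = G r := by
    intro r hr
    have h1 : Fi r = ((∫ t in Set.Ioi (0:ℝ), t ^ σ * Real.exp (-(r * t)) : ℝ) : ℂ) := by
      simp only [hFi]
      rw [show ((∫ t in Set.Ioi (0:ℝ), t ^ σ * Real.exp (-(r * t)) : ℝ) : ℂ)
          = ∫ t in Set.Ioi (0:ℝ), ((t ^ σ * Real.exp (-(r * t)) : ℝ) : ℂ)
          from integral_ofReal.symm]
      refine setIntegral_congr_fun measurableSet_Ioi (fun t _ => ?_)
      push_cast
      rw [neg_mul]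
    rw [h1, integral_rpow_exp hσ hr]
    simp only [hG]
    have hcast : ((σ:ℂ)+1) = ((σ+1:ℝ):ℂ) := by push_cast; ring
    rw [hcast, ← Complex.ofReal_cpow hr.le, ← Complex.ofReal_div]
    have hrp : (0:ℝ) < r ^ (σ+1) := Real.rpow_pos_of_pos hr _
    congr 1
    rw [one_div, Real.inv_rpow hr.le, inv_mul_eq_div]
  have hfreq : ∃ᶠ z in nhdsWithin (1:ℂ) {(1:ℂ)}ᶜ, Fi z = G z := by
    have htend : Tendsto (fun r : ℝ => (r:ℂ)) (nhdsWithin 1 (Set.Ioi 1))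
        (nhdsWithin (1:ℂ) {(1:ℂ)}ᶜ) := by
      apply tendsto_nhdsWithin_of_tendsto_nhds_of_eventually_within
      · exact (Complex.continuous_ofReal.tendsto 1).mono_left nhdsWithin_le_nhds
      · filter_upwards [self_mem_nhdsWithin] with r hr
        simp only [Set.mem_compl_iff, Set.mem_singleton_iff]
        intro h
        have : r = 1 := by exact_mod_cast h
        exact absurd this (ne_of_gt hr)
    refine htend.frequently ?_
    refine Eventually.frequently ?_
    filter_upwards [self_mem_nhdsWithin] with r hr
    exact hreal r (lt_trans one_pos hr)
  have := AnalyticOnNhd.eqOn_of_preconnected_of_frequently_eq hFa hGa hpre h1U hfreq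
  exact this hs

private lemma tail_bound {h : ℝ → ℂ} (hmeas : Measurable h) {σ η M : ℝ} (hσ : -1 < σ)
    (hM : 0 ≤ M) (hη : 0 ≤ η) (hb : ∀ t ≥ M, ‖h t‖ ≤ η * t ^ σ)
    {s : ℂ} (hs : 0 < s.re) :
    ‖∫ t in Set.Ioi M, Complex.exp (-s * t) * h t‖
      ≤ η * ((1/s.re) ^ (σ+1) * Real.Gamma (σ+1)) := by
  have hIoi : Set.Ioi M ⊆ Set.Ioi (0:ℝ) := fun x hx => lt_of_le_of_lt hM hx
  have hint0 : IntegrableOn (fun t : ℝ => η * (t ^ σ * Real.exp (-(s.re * t))))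
      (Set.Ioi 0) := (integrableOn_rpow_exp hσ hs).const_mul η
  have hint : IntegrableOn (fun t : ℝ => η * (t ^ σ * Real.exp (-(s.re * t))))
      (Set.Ioi M) := hint0.mono_set hIoi
  have h1 : ‖∫ t in Set.Ioi M, Complex.exp (-s * t) * h t‖
      ≤ ∫ t in Set.Ioi M, η * (t ^ σ * Real.exp (-(s.re * t))) := by
    refine norm_integral_le_of_norm_le hint ?_
    filter_upwards [self_mem_ae_restrict measurableSet_Ioi] with t ht
    have ht0 : (0:ℝ) < t := lt_of_le_of_lt hM ht
    calc ‖Complex.exp (-s * t) * h t‖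
        = Real.exp (-(s.re * t)) * ‖h t‖ := by
          rw [norm_mul, abs_cexp_neg_mul]
      _ ≤ Real.exp (-(s.re * t)) * (η * t ^ σ) :=
          mul_le_mul_of_nonneg_left (hb t ht.le) (Real.exp_nonneg _)
      _ = η * (t ^ σ * Real.exp (-(s.re * t))) := by ring
  have h2 : (∫ t in Set.Ioi M, η * (t ^ σ * Real.exp (-(s.re * t))))
      ≤ ∫ t in Set.Ioi (0:ℝ), η * (t ^ σ * Real.exp (-(s.re * t))) := by
    refine setIntegral_mono_set hint0 ?_ (HasSubset.Subset.eventuallyLE hIoi)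
    filter_upwards [self_mem_ae_restrict measurableSet_Ioi] with t ht
    have ht0 : (0:ℝ) < t := ht
    positivity
  refine (h1.trans h2).trans ?_
  rw [integral_const_mul, integral_rpow_exp hσ hs]

private lemma bound_from_tendsto {f : ℝ → ℂ} {B : ℂ} {σ : ℝ}
    (hasymp : Filter.Tendsto (fun t : ℝ => f t / ((t ^ σ : ℝ) : ℂ))
      Filter.atTop (nhds B))
    {η : ℝ} (hη : 0 < η) :
    ∃ M : ℝ, 1 ≤ M ∧ ∀ t ≥ M, ‖f t - B * ((t ^ σ : ℝ) : ℂ)‖ ≤ η * t ^ σ := by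
  obtain ⟨N, hN⟩ := (Metric.tendsto_atTop.mp hasymp η hη)
  refine ⟨max N 1, le_max_right _ _, fun t ht => ?_⟩
  have ht1 : (1:ℝ) ≤ t := le_trans (le_max_right _ _) ht
  have ht0 : (0:ℝ) < t := lt_of_lt_of_le one_pos ht1
  have htσ : (0:ℝ) < t ^ σ := Real.rpow_pos_of_pos ht0 _
  have hc : ((t ^ σ : ℝ) : ℂ) ≠ 0 := by
    simp only [Ne, Complex.ofReal_eq_zero]
    exact htσ.ne'
  have hd := hN t (le_trans (le_max_left _ _) ht)
  rw [Complex.dist_eq] at hd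
  have key : f t - B * ((t ^ σ : ℝ) : ℂ)
      = (f t / ((t ^ σ : ℝ) : ℂ) - B) * ((t ^ σ : ℝ) : ℂ) := by
    field_simp
  rw [key, norm_mul, Complex.norm_real, Real.norm_eq_abs, abs_of_pos htσ]
  exact mul_le_mul_of_nonneg_right hd.le htσ.le


set_option maxHeartbeats 1000000 in
/-- **Watson-type lemma at 0.** Let f : (0,∞) → ℂ be measurable,
integrable on (0,M) for every M > 0, and suppose f(t)/t^σ → B as t → +∞ for some
B ∈ ℂ and σ > −1. Then for every s with Re s > 0 the function t ↦ e^{−st} f(t) is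
absolutely integrable on (0,∞), and for every θ ∈ (0,π/2):
s^{σ+1} ∫₀^∞ e^{−st} f(t) dt → B·Γ(σ+1) as s → 0 in the sector |arg s| ≤ θ. -/
theorem laplace_asymptotics_at_zero
    (f : ℝ → ℂ) (hmeas : Measurable f)
    (hloc : ∀ M > (0 : ℝ), IntegrableOn f (Set.Ioo 0 M))
    (B : ℂ) (σ : ℝ) (hσ : -1 < σ)
    (hasymp : Filter.Tendsto (fun t : ℝ => f t / ((t ^ σ : ℝ) : ℂ))
      Filter.atTop (nhds B)) :
    (∀ s : ℂ, 0 < s.re →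
      IntegrableOn (fun t : ℝ => Complex.exp (-s * t) * f t) (Set.Ioi 0)) ∧
    (∀ θ : ℝ, 0 < θ → θ < Real.pi / 2 → ∀ ε > (0 : ℝ), ∃ δ > (0 : ℝ),
      ∀ s : ℂ, s ≠ 0 → ‖s‖ ≤ δ → |Complex.arg s| ≤ θ →
        ‖
          (s ^ ((σ : ℂ) + 1) *
              (∫ t in Set.Ioi (0 : ℝ), Complex.exp (-s * t) * f t) -
            B * (Real.Gamma (σ + 1) : ℂ))‖ ≤ ε) := by
  have hσ1 : (0:ℝ) < σ + 1 := by linarith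
  obtain ⟨M₀, hM₀1, hM₀b⟩ := bound_from_tendsto hasymp one_pos
  have hM₀0 : (0:ℝ) < M₀ := lt_of_lt_of_le one_pos hM₀1
  have hfb : ∀ t ≥ M₀, ‖f t‖ ≤ (‖B‖ + 1) * t ^ σ := by
    intro t ht
    have ht0 : (0:ℝ) < t := lt_of_lt_of_le hM₀0 ht
    have htσ : (0:ℝ) ≤ t ^ σ := Real.rpow_nonneg ht0.le σ
    have h1 := hM₀b t ht
    calc ‖f t‖
        = ‖(f t - B * ((t ^ σ : ℝ) : ℂ)) + B * ((t ^ σ : ℝ) : ℂ)‖ := by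
          ring_nf
      _ ≤ ‖f t - B * ((t ^ σ : ℝ) : ℂ)‖
            + ‖B * ((t ^ σ : ℝ) : ℂ)‖ := norm_add_le _ _
      _ ≤ 1 * t ^ σ + ‖B‖ * t ^ σ := by
          refine add_le_add h1 ?_
          rw [norm_mul, Complex.norm_real, Real.norm_eq_abs, abs_of_nonneg htσ]
      _ = (‖B‖ + 1) * t ^ σ := by ring
  have part1 : ∀ s : ℂ, 0 < s.re →
      IntegrableOn (fun t : ℝ => Complex.exp (-s * t) * f t) (Set.Ioi 0) :=
    fun s hs => integrable_exp_mul hmeas hloc hσ hM₀0 hfb hs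
  refine ⟨part1, ?_⟩
  intro θ hθ1 hθ2 ε hε
  set c := Real.cos θ with hcdef
  have hc : 0 < c := Real.cos_pos_of_mem_Ioo ⟨by linarith, hθ2⟩
  set Γ1 := Real.Gamma (σ+1) with hΓdef
  have hΓ : 0 < Γ1 := Real.Gamma_pos_of_pos hσ1
  set η := ε/2 * c ^ (σ+1) / Γ1 with hηdef
  have hηpos : 0 < η := by positivity
  obtain ⟨M, hM1, hMb⟩ := bound_from_tendsto hasymp hηpos
  have hM0 : (0:ℝ) < M := lt_of_lt_of_le one_pos hM1
  set g : ℝ → ℂ := fun t => f t - B * ((t ^ σ : ℝ) : ℂ) with hgdef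
  have hgmeas : Measurable g :=
    hmeas.sub (measurable_const.mul (Complex.measurable_ofReal.comp (meas_rpow σ)))
  have hgintM : IntegrableOn g (Set.Ioc 0 M) := by
    have h1 : IntegrableOn f (Set.Ioc 0 M) :=
      (hloc (M+1) (by linarith)).mono_set
        (fun x hx => ⟨hx.1, lt_of_le_of_lt hx.2 (by linarith)⟩)
    have h3 : IntegrableOn (fun t : ℝ => t ^ σ) (Set.Ioc 0 M) :=
      (intervalIntegrable_iff_integrableOn_Ioc_of_le hM0.le).mp
        (intervalIntegral.intervalIntegrable_rpow' hσ)
    exact h1.sub ((h3.ofReal).const_mul B)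
  set K := ∫ t in Set.Ioc (0:ℝ) M, ‖g t‖ with hKdef
  have hK0 : 0 ≤ K := integral_nonneg (fun t => norm_nonneg _)
  set δ := min 1 ((ε/2 / (K+1)) ^ ((σ+1)⁻¹)) with hδdef
  have hδpos : 0 < δ := lt_min one_pos (Real.rpow_pos_of_pos (div_pos (by linarith) (by linarith)) _)
  refine ⟨δ, hδpos, ?_⟩
  intro s hs0 hsδ hsarg
  have habs : 0 < ‖s‖ := norm_pos_iff.mpr hs0
  have hcosarg : c ≤ Real.cos s.arg := by
    rw [← Real.cos_abs]
    exact Real.cos_le_cos_of_nonneg_of_le_pi (abs_nonneg _)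
      (by linarith [Real.pi_pos]) hsarg
  have hre_eq : s.re = ‖s‖ * Real.cos s.arg := by
    rw [Complex.cos_arg hs0]
    field_simp
  have hsre : ‖s‖ * c ≤ s.re := by
    rw [hre_eq]
    exact mul_le_mul_of_nonneg_left hcosarg habs.le
  have hsre0 : 0 < s.re := lt_of_lt_of_le (by positivity) hsre
  -- integrability facts
  have hFf := part1 s hsre0
  have hFp : IntegrableOn (fun t : ℝ => Complex.exp (-s * t) * (B * ((t ^ σ : ℝ) : ℂ)))
      (Set.Ioi 0) := by
    have h := (integrable_power_exp hσ hsre0).const_mul B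
    have heq : (fun t : ℝ => B * (((t ^ σ : ℝ) : ℂ) * Complex.exp (-s * t)))
        = fun t : ℝ => Complex.exp (-s * t) * (B * ((t ^ σ : ℝ) : ℂ)) := by
      funext t; ring
    rwa [heq] at h
  have hFg : IntegrableOn (fun t : ℝ => Complex.exp (-s * t) * g t) (Set.Ioi 0) := by
    have heq : (fun t : ℝ => Complex.exp (-s * t) * g t)
        = fun t : ℝ => Complex.exp (-s * t) * f t
            - Complex.exp (-s * t) * (B * ((t ^ σ : ℝ) : ℂ)) := by
      funext t; simp only [hgdef]; ring
    rw [heq]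
    exact hFf.sub hFp
  -- split the integral of g
  have hsplit : (∫ t in Set.Ioi (0:ℝ), Complex.exp (-s * t) * g t)
      = (∫ t in Set.Ioc (0:ℝ) M, Complex.exp (-s * t) * g t)
        + ∫ t in Set.Ioi M, Complex.exp (-s * t) * g t := by
    rw [← setIntegral_union (Set.Ioc_disjoint_Ioi le_rfl) measurableSet_Ioi
      (hFg.mono_set (fun x hx => hx.1))
      (hFg.mono_set (fun x hx => lt_trans hM0 hx)),
      Set.Ioc_union_Ioi_eq_Ioi hM0.le]
  have hgamma := gamma_integral_complex hσ hsre0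
  have hsne : s ^ ((σ:ℂ)+1) ≠ 0 := by
    rw [Ne, Complex.cpow_eq_zero_iff]
    tauto
  have hintf_split : (∫ t in Set.Ioi (0:ℝ), Complex.exp (-s * t) * f t)
      = (∫ t in Set.Ioi (0:ℝ), Complex.exp (-s * t) * g t)
        + B * ((Real.Gamma (σ+1) : ℂ) / s ^ ((σ:ℂ)+1)) := by
    rw [← hgamma, ← integral_const_mul]
    rw [← integral_add hFg]
    · refine setIntegral_congr_fun measurableSet_Ioi (fun t _ => ?_)
      simp only [hgdef]; ring
    · have heq : (fun t : ℝ => B * (((t ^ σ : ℝ) : ℂ) * Complex.exp (-s * t)))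
          = fun t : ℝ => Complex.exp (-s * t) * (B * ((t ^ σ : ℝ) : ℂ)) := by
        funext t; ring
      rw [heq]; exact hFp
  have hkey : s ^ ((σ:ℂ)+1) * (∫ t in Set.Ioi (0:ℝ), Complex.exp (-s * t) * f t)
      - B * (Real.Gamma (σ+1) : ℂ)
      = s ^ ((σ:ℂ)+1) * ∫ t in Set.Ioi (0:ℝ), Complex.exp (-s * t) * g t := by
    rw [hintf_split]
    field_simp
    ring
  rw [hkey, hsplit, mul_add]
  -- abs of the cpow
  have habsp : ‖s ^ ((σ:ℂ)+1)‖ = (‖s‖) ^ (σ+1) := by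
    rw [Complex.norm_cpow_of_ne_zero hs0]
    simp
  -- bound 1
  have hδ1 : (‖s‖) ^ (σ+1) ≤ ε/2/(K+1) := by
    calc (‖s‖) ^ (σ+1) ≤ δ ^ (σ+1) :=
          Real.rpow_le_rpow habs.le hsδ hσ1.le
      _ ≤ ((ε/2 / (K+1)) ^ ((σ+1)⁻¹)) ^ (σ+1) :=
          Real.rpow_le_rpow hδpos.le (min_le_right _ _) hσ1.le
      _ = ε/2/(K+1) := Real.rpow_inv_rpow (div_nonneg (by linarith) (by linarith)) hσ1.ne'
  have habsI1 : ‖∫ t in Set.Ioc (0:ℝ) M, Complex.exp (-s * t) * g t‖ ≤ K := by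
    rw [hKdef]
    refine norm_integral_le_of_norm_le hgintM.norm ?_
    filter_upwards [self_mem_ae_restrict measurableSet_Ioc] with t ht
    have ht0 : (0:ℝ) < t := ht.1
    have h1 : ‖Complex.exp (-s * t)‖ ≤ 1 := by
      rw [abs_cexp_neg_mul, Real.exp_le_one_iff]
      nlinarith
    calc ‖Complex.exp (-s * t) * g t‖
        = ‖Complex.exp (-s * t)‖ * ‖g t‖ := by
          rw [norm_mul]
      _ ≤ 1 * ‖g t‖ := mul_le_mul_of_nonneg_right h1 (norm_nonneg _)
      _ = ‖g t‖ := one_mul _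
  have hterm1 : ‖s ^ ((σ:ℂ)+1)
        * ∫ t in Set.Ioc (0:ℝ) M, Complex.exp (-s * t) * g t‖ ≤ ε/2 := by
    rw [norm_mul, habsp]
    calc (‖s‖) ^ (σ+1)
          * ‖∫ t in Set.Ioc (0:ℝ) M, Complex.exp (-s * t) * g t‖
        ≤ (ε/2/(K+1)) * K := by
          refine mul_le_mul hδ1 habsI1 (norm_nonneg _) (div_nonneg (by linarith) (by linarith))
      _ ≤ ε/2 := by
          rw [div_mul_eq_mul_div, div_le_iff₀ (by linarith : (0:ℝ) < K+1)]
          nlinarith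
  -- bound 2
  have htail := tail_bound hgmeas hσ hM0.le hηpos.le hMb hsre0
  have hterm2 : ‖s ^ ((σ:ℂ)+1)
        * ∫ t in Set.Ioi M, Complex.exp (-s * t) * g t‖ ≤ ε/2 := by
    rw [norm_mul, habsp]
    have h1 : (‖s‖) ^ (σ+1)
          * ‖∫ t in Set.Ioi M, Complex.exp (-s * t) * g t‖
        ≤ (‖s‖) ^ (σ+1) * (η * ((1/s.re) ^ (σ+1) * Γ1)) :=
      mul_le_mul_of_nonneg_left htail (Real.rpow_nonneg habs.le _)
    refine h1.trans ?_
    have h2 : (‖s‖) ^ (σ+1) * (1/s.re) ^ (σ+1)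
        = (‖s‖ / s.re) ^ (σ+1) := by
      rw [← Real.mul_rpow habs.le (by positivity)]
      congr 1
      field_simp
    have h3 : ‖s‖ / s.re ≤ 1/c := by
      rw [div_le_div_iff₀ hsre0 hc]
      linarith [hsre]
    have h4 : (‖s‖ / s.re) ^ (σ+1) ≤ (1/c) ^ (σ+1) :=
      Real.rpow_le_rpow (by positivity) h3 hσ1.le
    have h5 : (‖s‖) ^ (σ+1) * (η * ((1/s.re) ^ (σ+1) * Γ1))
        = η * Γ1 * ((‖s‖ / s.re) ^ (σ+1)) := by
      rw [← h2]; ring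
    rw [h5]
    have h6 : η * Γ1 * ((‖s‖ / s.re) ^ (σ+1)) ≤ η * Γ1 * ((1/c) ^ (σ+1)) :=
      mul_le_mul_of_nonneg_left h4 (by positivity)
    refine h6.trans ?_
    rw [hηdef, one_div, Real.inv_rpow hc.le]
    have hcp : (0:ℝ) < c ^ (σ+1) := Real.rpow_pos_of_pos hc _
    rw [div_mul_eq_mul_div, div_mul_eq_mul_div, div_le_iff₀ (by positivity)]
    have : ε/2 * c ^ (σ+1) * Γ1 * (c ^ (σ+1))⁻¹ = ε/2 * Γ1 * (c ^ (σ+1) * (c ^ (σ+1))⁻¹) := by ring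
    rw [mul_inv_cancel₀ hcp.ne'] at this
    nlinarith [this]
  calc ‖s ^ ((σ:ℂ)+1)
          * (∫ t in Set.Ioc (0:ℝ) M, Complex.exp (-s * t) * g t)
        + s ^ ((σ:ℂ)+1) * ∫ t in Set.Ioi M, Complex.exp (-s * t) * g t‖
      ≤ ‖s ^ ((σ:ℂ)+1)
          * ∫ t in Set.Ioc (0:ℝ) M, Complex.exp (-s * t) * g t‖
        + ‖s ^ ((σ:ℂ)+1)
          * ∫ t in Set.Ioi M, Complex.exp (-s * t) * g t‖ := norm_add_le _ _
    _ ≤ ε/2 + ε/2 := add_le_add hterm1 hterm2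
    _ = ε := by ring
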